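/- Every 1-dimensional subalgebra of sl(3, ℂ) is conjugate under GL(3, ℂ) to the span of one of the matrices: the nilpotent Jordan block Ξ₁ with a single 3×3 Jordan block of eigenvalue 0; Ξ_{2,1} = E_{23}; Ξ_{2,3} = diag-block [[1,1],[0,1]] ⊕ (−2); Ξ_{3,2} = diag(1, −1, 0); or Ξ_{3,3} = diag(a, b, −(a+b)) with a, b, a+b all nonzero (after scaling one eigenvalue to 1). -/

import Mathlib

open Matrix Polynomial Module

-- building-block lemma: conjugation from a basis of "columns"
lemma build (A B : Matrix (Fin 3) (Fin 3) ℂ) (v : Fin 3 → Fin 3 → ℂ)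
    (hind : ∀ x : Fin 3 → ℂ, x 0 • v 0 + x 1 • v 1 + x 2 • v 2 = 0 → x = 0)
    (hAB : ∀ j, A.mulVec (v j) = B 0 j • v 0 + B 1 j • v 1 + B 2 j • v 2) :
    ∃ g : GL (Fin 3) ℂ,
      (g : Matrix (Fin 3) (Fin 3) ℂ) * A * (↑g⁻¹ : Matrix (Fin 3) (Fin 3) ℂ) = B := by
  set P : Matrix (Fin 3) (Fin 3) ℂ := Matrix.of (fun i j => v j i) with hP
  have hdet : P.det ≠ 0 := by
    intro h
    obtain ⟨x, hx0, hx⟩ := (Matrix.exists_mulVec_eq_zero_iff).2 h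
    apply hx0
    apply hind
    funext i
    have := congrFun hx i
    simpa [hP, Matrix.mulVec, dotProduct, Fin.sum_univ_three, mul_comm] using this
  have hunit : IsUnit P := (Matrix.isUnit_iff_isUnit_det P).2 (isUnit_iff_ne_zero.2 hdet)
  have hAP : A * P = P * B := by
    ext i j
    have h1 : (A * P) i j = A.mulVec (v j) i := by
      simp [Matrix.mul_apply, Matrix.mulVec, dotProduct, hP]
    have h2 : (P * B) i j = B 0 j * v 0 i + B 1 j * v 1 i + B 2 j * v 2 i := by
      simp [Matrix.mul_apply, hP, Fin.sum_univ_three]; ring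
    rw [h1, h2, hAB j]
    simp [mul_comm]
  refine ⟨hunit.unit⁻¹, ?_⟩
  have h1 : (↑(hunit.unit⁻¹)⁻¹ : Matrix (Fin 3) (Fin 3) ℂ) = P := by simp
  have h2 : (↑(hunit.unit⁻¹) : Matrix (Fin 3) (Fin 3) ℂ) * P = 1 := by
    simpa using hunit.unit.inv_mul
  rw [h1, mul_assoc, hAP, ← mul_assoc, h2, one_mul]

lemma eval_charpoly' (A : Matrix (Fin 3) (Fin 3) ℂ) (r : ℂ) :
    A.charpoly.eval r = (r • (1 : Matrix (Fin 3) (Fin 3) ℂ) - A).det := by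
  rw [Matrix.charpoly, ← Polynomial.coe_evalRingHom, RingHom.map_det]
  congr 1
  ext i j
  by_cases h : i = j
  · subst h; simp [Matrix.charmatrix_apply_eq, Matrix.one_apply]
  · simp [Matrix.charmatrix_apply_ne _ _ _ h, Matrix.one_apply, h]

lemma eigvec (A : Matrix (Fin 3) (Fin 3) ℂ) (r : ℂ) (h : A.charpoly.eval r = 0) :
    ∃ v : Fin 3 → ℂ, v ≠ 0 ∧ A.mulVec v = r • v := by
  rw [eval_charpoly'] at h
  obtain ⟨v, hv0, hv⟩ := (Matrix.exists_mulVec_eq_zero_iff).2 h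
  refine ⟨v, hv0, ?_⟩
  have := hv
  rw [Matrix.sub_mulVec, sub_eq_zero] at this
  rw [← this, Matrix.smul_mulVec, Matrix.one_mulVec]

-- roots of charpoly
lemma roots3 (A : Matrix (Fin 3) (Fin 3) ℂ) (htr : A.trace = 0) :
    ∃ a b c : ℂ, a + b + c = 0 ∧
      A.charpoly = (X - C a) * (X - C b) * (X - C c) := by
  have hsp : A.charpoly.Splits := IsAlgClosed.splits A.charpoly
  have hdeg : A.charpoly.natDegree = 3 := by
    simpa using A.charpoly_natDegree_eq_dim
  have hcard : Multiset.card A.charpoly.roots = 3 := by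
    rw [(Polynomial.splits_iff_card_roots).1 hsp, hdeg]
  obtain ⟨a, b, c, habc⟩ := Multiset.card_eq_three.1 hcard
  refine ⟨a, b, c, ?_, ?_⟩
  · have := A.trace_eq_sum_roots_charpoly
    rw [htr, habc] at this
    simpa [add_assoc] using this.symm
  · have := hsp.eq_prod_roots_of_monic A.charpoly_monic
    rw [habc] at this
    rw [this]
    simp [Multiset.map_cons, Multiset.prod_cons]
    ring

lemma comm_smul (A : Matrix (Fin 3) (Fin 3) ℂ) (r s : ℂ) :
    (A - r•1) * (A - s•1) = (A - s•1) * (A - r•1) := by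
  simp only [mul_sub, sub_mul, Matrix.mul_smul, Matrix.smul_mul, smul_smul, mul_one, one_mul,
    mul_comm r s]
  abel

lemma CHfact (A : Matrix (Fin 3) (Fin 3) ℂ) (a b c : ℂ)
    (h : A.charpoly = (X - C a) * (X - C b) * (X - C c)) :
    (A - a•1) * (A - b•1) * (A - c•1) = 0 := by
  have := A.aeval_self_charpoly
  rw [h] at this
  simpa [_root_.map_mul, _root_.map_sub, aeval_X, aeval_C, Algebra.algebraMap_eq_smul_one] using this

lemma vec_ne ⦃v : Fin 3 → ℂ⦄ (h : v ≠ 0) : ∃ i, v i ≠ 0 := by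
  by_contra hc; push_neg at hc; exact h (funext fun i => hc i)

lemma eig_indep (A : Matrix (Fin 3) (Fin 3) ℂ) (a b c : ℂ) (v0 v1 v2 : Fin 3 → ℂ)
    (hab : a ≠ b) (hac : a ≠ c) (hbc : b ≠ c)
    (h0 : A.mulVec v0 = a • v0) (h1 : A.mulVec v1 = b • v1) (h2 : A.mulVec v2 = c • v2)
    (n0 : v0 ≠ 0) (n1 : v1 ≠ 0) (n2 : v2 ≠ 0) :
    ∀ x : Fin 3 → ℂ, x 0 • v0 + x 1 • v1 + x 2 • v2 = 0 → x = 0 := by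
  intro x hx
  have hx1 : x 0 • (a • v0) + x 1 • (b • v1) + x 2 • (c • v2) = 0 := by
    have := congrArg A.mulVec hx
    simpa [Matrix.mulVec_add, Matrix.mulVec_smul, h0, h1, h2] using this
  have hx2 : x 0 • (a • a • v0) + x 1 • (b • b • v1) + x 2 • (c • c • v2) = 0 := by
    have := congrArg A.mulVec hx1
    simpa [Matrix.mulVec_add, Matrix.mulVec_smul, h0, h1, h2] using this
  have e0 : ∀ i, x 0 * v0 i + x 1 * v1 i + x 2 * v2 i = 0 := by
    intro i; have := congrFun hx i
    simpa [Pi.add_apply, Pi.smul_apply, smul_eq_mul] using this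
  have e1 : ∀ i, x 0 * (a * v0 i) + x 1 * (b * v1 i) + x 2 * (c * v2 i) = 0 := by
    intro i; have := congrFun hx1 i
    simpa [Pi.add_apply, Pi.smul_apply, smul_eq_mul, mul_assoc] using this
  have e2 : ∀ i, x 0 * (a * (a * v0 i)) + x 1 * (b * (b * v1 i)) + x 2 * (c * (c * v2 i)) = 0 := by
    intro i; have := congrFun hx2 i
    simpa [Pi.add_apply, Pi.smul_apply, smul_eq_mul, mul_assoc] using this
  obtain ⟨i0, hi0⟩ := vec_ne n0
  obtain ⟨i1, hi1⟩ := vec_ne n1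
  obtain ⟨i2, hi2⟩ := vec_ne n2
  have hx0 : x 0 = 0 := by
    have key : x 0 * ((a - b) * (a - c)) * v0 i0 = 0 := by
      linear_combination (e2 i0) - (b + c) * (e1 i0) + (b * c) * (e0 i0)
    have := mul_eq_zero.1 key
    rcases this with h | h
    · rcases mul_eq_zero.1 h with h' | h'
      · exact h'
      · exact absurd h' (by
          intro hc
          rcases mul_eq_zero.1 hc with h'' | h''
          · exact hab (by linear_combination h'')
          · exact hac (by linear_combination h''))
    · exact absurd h hi0
  have hx1' : x 1 = 0 := by
    have key : x 1 * ((b - a) * (b - c)) * v1 i1 = 0 := by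
      linear_combination (e2 i1) - (a + c) * (e1 i1) + (a * c) * (e0 i1)
    rcases mul_eq_zero.1 key with h | h
    · rcases mul_eq_zero.1 h with h' | h'
      · exact h'
      · exact absurd h' (by
          intro hc
          rcases mul_eq_zero.1 hc with h'' | h''
          · exact hab (by linear_combination -h'')
          · exact hbc (by linear_combination h''))
    · exact absurd h hi1
  have hx2' : x 2 = 0 := by
    have key : x 2 * ((c - a) * (c - b)) * v2 i2 = 0 := by
      linear_combination (e2 i2) - (a + b) * (e1 i2) + (a * b) * (e0 i2)
    rcases mul_eq_zero.1 key with h | h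
    · rcases mul_eq_zero.1 h with h' | h'
      · exact h'
      · exact absurd h' (by
          intro hc
          rcases mul_eq_zero.1 hc with h'' | h''
          · exact hac (by linear_combination -h'')
          · exact hbc (by linear_combination -h''))
    · exact absurd h hi2
  funext i
  fin_cases i <;> simpa [hx0, hx1', hx2']

lemma exists_mulVec_ne (M : Matrix (Fin 3) (Fin 3) ℂ) (h : M ≠ 0) :
    ∃ w : Fin 3 → ℂ, M.mulVec w ≠ 0 := by
  by_contra hc
  push_neg at hc
  apply h
  ext i j
  have := congrFun (hc (Pi.single j 1)) i
  simpa using this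

lemma one_le_rk (p : Submodule ℂ (Fin 3 → ℂ)) (x : Fin 3 → ℂ) (hx : x ∈ p) (h0 : x ≠ 0) :
    1 ≤ finrank ℂ p := by
  have h1 : (ℂ ∙ x) ≤ p := by
    rw [Submodule.span_le]; simpa using hx
  calc 1 = finrank ℂ (ℂ ∙ x) := (finrank_span_singleton h0).symm
    _ ≤ finrank ℂ p := Submodule.finrank_mono h1

lemma pair_in (p : Submodule ℂ (Fin 3 → ℂ)) (h2 : 2 ≤ finrank ℂ p) (x : Fin 3 → ℂ)
    (hx : x ∈ p) (hx0 : x ≠ 0) :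
    ∃ y, y ∈ p ∧ ∀ s t : ℂ, s • x + t • y = 0 → s = 0 ∧ t = 0 := by
  have hx0' : (⟨x, hx⟩ : p) ≠ 0 := by
    simp only [ne_eq, Submodule.mk_eq_zero]; exact hx0
  obtain ⟨y', hy'⟩ := exists_linearIndependent_pair_of_one_lt_finrank
    (by omega : 1 < finrank ℂ p) hx0'
  refine ⟨(y' : Fin 3 → ℂ), y'.2, fun s t hst => ?_⟩
  have hz : s • (⟨x, hx⟩ : p) + t • y' = 0 := by
    apply Subtype.ext
    simpa using hst
  have := Fintype.linearIndependent_iff.1 hy' ![s, t] (by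
    simpa [Fin.sum_univ_two] using hz)
  exact ⟨this 0, this 1⟩
def Concl (A : Matrix (Fin 3) (Fin 3) ℂ) : Prop :=
    ∃ g : GL (Fin 3) ℂ, ∃ c : ℂ, c ≠ 0 ∧
      ((g : Matrix (Fin 3) (Fin 3) ℂ) * A * (↑g⁻¹ : Matrix (Fin 3) (Fin 3) ℂ) =
          c • !![(0:ℂ),1,0; 0,0,1; 0,0,0] ∨
       (g : Matrix (Fin 3) (Fin 3) ℂ) * A * (↑g⁻¹ : Matrix (Fin 3) (Fin 3) ℂ) =
          c • !![(0:ℂ),0,0; 0,0,1; 0,0,0] ∨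
       (g : Matrix (Fin 3) (Fin 3) ℂ) * A * (↑g⁻¹ : Matrix (Fin 3) (Fin 3) ℂ) =
          c • !![(1:ℂ),1,0; 0,1,0; 0,0,-2] ∨
       (g : Matrix (Fin 3) (Fin 3) ℂ) * A * (↑g⁻¹ : Matrix (Fin 3) (Fin 3) ℂ) =
          c • !![(1:ℂ),0,0; 0,-1,0; 0,0,0] ∨
       ∃ a b : ℂ, a ≠ 0 ∧ b ≠ 0 ∧ a + b ≠ 0 ∧
         (g : Matrix (Fin 3) (Fin 3) ℂ) * A * (↑g⁻¹ : Matrix (Fin 3) (Fin 3) ℂ) =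
            c • !![a,0,0; 0,b,0; 0,0,-(a+b)])

lemma distinct_case (A : Matrix (Fin 3) (Fin 3) ℂ) (a b c : ℂ)
    (hsum : a + b + c = 0) (hab : a ≠ b) (hac : a ≠ c) (hbc : b ≠ c)
    (va vb vc : Fin 3 → ℂ) (na : va ≠ 0) (nb : vb ≠ 0) (nc : vc ≠ 0)
    (ha : A.mulVec va = a • va) (hb : A.mulVec vb = b • vb) (hc : A.mulVec vc = c • vc) :
    Concl A := by
  by_cases hc0 : c = 0
  · subst hc0
    have hb' : b = -a := by linear_combination hsum
    obtain ⟨g, hg⟩ := build A (a • !![(1:ℂ),0,0; 0,-1,0; 0,0,0]) ![va, vb, vc]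
      (eig_indep A a b 0 va vb vc hab hac hbc ha hb hc na nb nc)
      (by intro j; fin_cases j <;> simp [ha, hb, hc, hb', Matrix.vecHead, Matrix.vecTail])
    exact ⟨g, a, hac, Or.inr (Or.inr (Or.inr (Or.inl hg)))⟩
  · by_cases hb0 : b = 0
    · subst hb0
      have ha0 : a ≠ 0 := hab
      have hc' : c = -a := by linear_combination hsum
      obtain ⟨g, hg⟩ := build A (a • !![(1:ℂ),0,0; 0,-1,0; 0,0,0]) ![va, vc, vb]
        (eig_indep A a c 0 va vc vb hac hab (Ne.symm hbc) ha hc hb na nc nb)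
        (by intro j; fin_cases j <;> simp [ha, hb, hc, hc', Matrix.vecHead, Matrix.vecTail])
      exact ⟨g, a, ha0, Or.inr (Or.inr (Or.inr (Or.inl hg)))⟩
    · by_cases ha0 : a = 0
      · subst ha0
        have hb0' : b ≠ 0 := Ne.symm hab
        have hc' : c = -b := by linear_combination hsum
        obtain ⟨g, hg⟩ := build A (b • !![(1:ℂ),0,0; 0,-1,0; 0,0,0]) ![vb, vc, va]
          (eig_indep A b c 0 vb vc va hbc (Ne.symm hab) (Ne.symm hac) hb hc ha nb nc na)
          (by intro j; fin_cases j <;> simp [ha, hb, hc, hc', Matrix.vecHead, Matrix.vecTail])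
        exact ⟨g, b, hb0', Or.inr (Or.inr (Or.inr (Or.inl hg)))⟩
      · have hc' : c = -(a+b) := by linear_combination hsum
        have hab0 : a + b ≠ 0 := by
          intro h; exact hc0 (by linear_combination hsum - h)
        obtain ⟨g, hg⟩ := build A ((1:ℂ) • !![a,0,0; 0,b,0; 0,0,-(a+b)]) ![va, vb, vc]
          (eig_indep A a b c va vb vc hab hac hbc ha hb hc na nb nc)
          (by intro j; fin_cases j <;> simp [ha, hb, hc, hc', Matrix.vecHead, Matrix.vecTail])
        exact ⟨g, 1, one_ne_zero,
          Or.inr (Or.inr (Or.inr (Or.inr ⟨a, b, ha0, hb0, hab0, hg⟩)))⟩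
lemma semi_indep (A : Matrix (Fin 3) (Fin 3) ℂ) (p q : ℂ) (hpq : p ≠ q)
    (u1 u2 z : Fin 3 → ℂ)
    (h1 : A.mulVec u1 = p • u1) (h2 : A.mulVec u2 = p • u2) (hz : A.mulVec z = q • z)
    (nz : z ≠ 0)
    (hpair : ∀ s t : ℂ, s • u1 + t • u2 = 0 → s = 0 ∧ t = 0) :
    ∀ x : Fin 3 → ℂ, x 0 • u1 + x 1 • u2 + x 2 • z = 0 → x = 0 := by
  intro x hx
  have hx1 : x 0 • (p • u1) + x 1 • (p • u2) + x 2 • (q • z) = 0 := by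
    have := congrArg A.mulVec hx
    simpa [Matrix.mulVec_add, Matrix.mulVec_smul, h1, h2, hz] using this
  have e0 : ∀ i, x 0 * u1 i + x 1 * u2 i + x 2 * z i = 0 := by
    intro i; have := congrFun hx i; simpa using this
  have e1 : ∀ i, x 0 * (p * u1 i) + x 1 * (p * u2 i) + x 2 * (q * z i) = 0 := by
    intro i; have := congrFun hx1 i
    simpa [mul_assoc] using this
  obtain ⟨i2, hi2⟩ := vec_ne nz
  have hx2 : x 2 = 0 := by
    have key : x 2 * ((q - p) * z i2) = 0 := by
      linear_combination (e1 i2) - p * (e0 i2)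
    rcases mul_eq_zero.1 key with h | h
    · exact h
    · rcases mul_eq_zero.1 h with h' | h'
      · exact absurd (by linear_combination -h' : p = q) hpq
      · exact absurd h' hi2
  have hx01 := hpair (x 0) (x 1) (by
    have := hx; rw [hx2, zero_smul, add_zero] at this; exact this)
  funext i
  fin_cases i <;> simp [hx01.1, hx01.2, hx2]

lemma double_case (A : Matrix (Fin 3) (Fin 3) ℂ) (htr : A.trace = 0) (a c : ℂ)
    (hac : a ≠ c) (hsum : a + a + c = 0)
    (hCH : (A - a • 1) * (A - a • 1) * (A - c • 1) = 0)
    (va vc : Fin 3 → ℂ) (na : va ≠ 0) (nc : vc ≠ 0)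
    (ha : A.mulVec va = a • va) (hc : A.mulVec vc = c • vc) :
    Concl A := by
  have ha0 : a ≠ 0 := by
    intro h; apply hac; rw [h]; linear_combination -hsum + 2 * h
  have hmV : ∀ (r : ℂ) (x : Fin 3 → ℂ), (A - r • 1).mulVec x = A.mulVec x - r • x := by
    intro r x
    simp [Matrix.sub_mulVec, Matrix.smul_mulVec, Matrix.one_mulVec]
  by_cases hd : (A - a • 1) * (A - c • 1) = 0
  · -- diagonalizable-type case
    set m : Matrix (Fin 3) (Fin 3) ℂ := A - a • 1 with hm
    set n : Matrix (Fin 3) (Fin 3) ℂ := A - c • 1 with hn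
    have hkm : ∀ x, x ∈ LinearMap.ker m.mulVecLin ↔ A.mulVec x = a • x := by
      intro x
      rw [LinearMap.mem_ker, Matrix.mulVecLin_apply, hmV, sub_eq_zero]
    have hkn : ∀ x, x ∈ LinearMap.ker n.mulVecLin ↔ A.mulVec x = c • x := by
      intro x
      rw [LinearMap.mem_ker, Matrix.mulVecLin_apply, hmV, sub_eq_zero]
    have hrange : LinearMap.range n.mulVecLin ≤ LinearMap.ker m.mulVecLin := by
      rw [LinearMap.range_le_ker_iff, ← Matrix.mulVecLin_mul, hd, Matrix.mulVecLin_zero]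
    have hrn : Module.finrank ℂ (LinearMap.range n.mulVecLin)
        + Module.finrank ℂ (LinearMap.ker n.mulVecLin) = 3 := by
      have := LinearMap.finrank_range_add_finrank_ker n.mulVecLin
      simpa using this
    have hge : 3 ≤ Module.finrank ℂ (LinearMap.ker m.mulVecLin)
        + Module.finrank ℂ (LinearMap.ker n.mulVecLin) := by
      have := Submodule.finrank_mono hrange
      omega
    have hdisj : (LinearMap.ker m.mulVecLin) ⊓ (LinearMap.ker n.mulVecLin) = ⊥ := by
      rw [eq_bot_iff]
      rintro x ⟨hx1, hx2⟩
      rw [SetLike.mem_coe, hkm] at hx1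
      rw [SetLike.mem_coe, hkn] at hx2
      have : (a - c) • x = 0 := by
        rw [sub_smul, ← hx1, ← hx2, sub_self]
      rcases smul_eq_zero.1 this with h | h
      · exact absurd (by linear_combination h : a = c) hac
      · simp [h]
    have hle : Module.finrank ℂ (LinearMap.ker m.mulVecLin)
        + Module.finrank ℂ (LinearMap.ker n.mulVecLin) ≤ 3 := by
      have h1 := Submodule.finrank_sup_add_finrank_inf_eq
        (LinearMap.ker m.mulVecLin) (LinearMap.ker n.mulVecLin)
      rw [hdisj] at h1
      have h2 := Submodule.finrank_le (LinearMap.ker m.mulVecLin ⊔ LinearMap.ker n.mulVecLin)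
      simp only [finrank_bot, add_zero] at h1
      simp only [Module.finrank_fintype_fun_eq_card, Fintype.card_fin] at h2
      omega
    have hkm1 : 1 ≤ Module.finrank ℂ (LinearMap.ker m.mulVecLin) :=
      one_le_rk _ va ((hkm va).2 ha) na
    have hkn1 : 1 ≤ Module.finrank ℂ (LinearMap.ker n.mulVecLin) :=
      one_le_rk _ vc ((hkn vc).2 hc) nc
    rcases (by omega : 2 ≤ Module.finrank ℂ (LinearMap.ker m.mulVecLin)
        ∨ 2 ≤ Module.finrank ℂ (LinearMap.ker n.mulVecLin)) with h2 | h2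
    · -- two independent a-eigenvectors : diag(a, a, c), case 5
      obtain ⟨y, hy, hpair⟩ := pair_in _ h2 va ((hkm va).2 ha) na
      have hyA : A.mulVec y = a • y := (hkm y).1 hy
      have hc' : c = -(a + a) := by linear_combination hsum
      obtain ⟨g, hg⟩ := build A ((1:ℂ) • !![a,0,0; 0,a,0; 0,0,-(a+a)]) ![va, y, vc]
        (semi_indep A a c hac va y vc ha hyA hc nc hpair)
        (by intro j; fin_cases j <;>
          simp [ha, hyA, hc, hc', Matrix.vecHead, Matrix.vecTail])
      exact ⟨g, 1, one_ne_zero, Or.inr (Or.inr (Or.inr (Or.inr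
        ⟨a, a, ha0, ha0, by intro h; exact ha0 (by linear_combination h / 2), hg⟩)))⟩
    · -- two independent c-eigenvectors : contradiction with trace
      obtain ⟨y, hy, hpair⟩ := pair_in _ h2 vc ((hkn vc).2 hc) nc
      have hyA : A.mulVec y = c • y := (hkn y).1 hy
      obtain ⟨g, hg⟩ := build A (!![c,0,0; 0,c,0; 0,0,a]) ![vc, y, va]
        (semi_indep A c a (Ne.symm hac) vc y va hc hyA ha na hpair)
        (by intro j; fin_cases j <;>
          simp [ha, hyA, hc, Matrix.vecHead, Matrix.vecTail])
      exfalso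
      have htr2 : (!![c,0,0; 0,c,0; 0,0,a] : Matrix (Fin 3) (Fin 3) ℂ).trace = A.trace := by
        rw [← hg, Matrix.trace_mul_comm, ← mul_assoc]
        have : (↑g⁻¹ : Matrix (Fin 3) (Fin 3) ℂ) * (g : Matrix (Fin 3) (Fin 3) ℂ) = 1 :=
          Units.inv_mul g
        rw [this, one_mul]
      rw [htr] at htr2
      have : c + c + a = 0 := by
        simpa [Matrix.trace, Fin.sum_univ_three, Matrix.vecHead, Matrix.vecTail] using htr2
      exact hac (by linear_combination hsum - this)
  · -- Jordan block of size 2 : case Ξ_{2,3}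
    obtain ⟨w, hw⟩ := exists_mulVec_ne _ hd
    set u : Fin 3 → ℂ := (A - c • 1).mulVec w with hu
    have hu1 : (A - a • 1).mulVec u ≠ 0 := by
      rw [hu, Matrix.mulVec_mulVec]
      exact hw
    have hu2 : (A - a • 1).mulVec ((A - a • 1).mulVec u) = 0 := by
      rw [hu]
      simp only [Matrix.mulVec_mulVec]
      rw [← mul_assoc, hCH, Matrix.zero_mulVec]
    set v1 : Fin 3 → ℂ := a⁻¹ • ((A - a • 1).mulVec u) with hv1def
    have n1 : v1 ≠ 0 := smul_ne_zero (inv_ne_zero ha0) hu1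
    have hv1 : A.mulVec v1 = a • v1 := by
      have hmv1 : (A - a • 1).mulVec v1 = 0 := by
        rw [hv1def, Matrix.mulVec_smul, hu2, smul_zero]
      rw [hmV] at hmv1
      rw [sub_eq_zero] at hmv1
      exact hmv1
    have hvu : A.mulVec u = a • v1 + a • u := by
      have hav1 : a • v1 = (A - a • 1).mulVec u := by
        rw [hv1def, smul_smul, mul_inv_cancel₀ ha0, one_smul]
      rw [hav1, hmV]
      abel
    have hc2 : c = a * (-2) := by linear_combination hsum
    have hind : ∀ x : Fin 3 → ℂ, x 0 • v1 + x 1 • u + x 2 • vc = 0 → x = 0 := by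
      intro x hx
      have hx1 : x 0 • (a • v1) + x 1 • (a • v1 + a • u) + x 2 • (c • vc) = 0 := by
        have := congrArg A.mulVec hx
        simpa [Matrix.mulVec_add, Matrix.mulVec_smul, hv1, hvu, hc] using this
      have hx2 : x 0 • (a • (a • v1)) + x 1 • (a • (a • v1) + a • (a • v1 + a • u))
          + x 2 • (c • (c • vc)) = 0 := by
        have := congrArg A.mulVec hx1
        simpa [Matrix.mulVec_add, Matrix.mulVec_smul, hv1, hvu, hc, smul_add] using this
      have e0 : ∀ i, x 0 * v1 i + x 1 * u i + x 2 * vc i = 0 := by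
        intro i; have := congrFun hx i; simpa using this
      have e1 : ∀ i, x 0 * (a * v1 i) + x 1 * (a * v1 i + a * u i) + x 2 * (c * vc i) = 0 := by
        intro i; have h := congrFun hx1 i; simp [mul_assoc] at h; linear_combination h
      have e2 : ∀ i, x 0 * (a * (a * v1 i)) + x 1 * (a * (a * v1 i) + a * (a * v1 i + a * u i))
          + x 2 * (c * (c * vc i)) = 0 := by
        intro i; have h := congrFun hx2 i; simp [mul_assoc, mul_add] at h; linear_combination h
      obtain ⟨i1, hi1⟩ := vec_ne n1
      obtain ⟨i2, hi2⟩ := vec_ne nc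
      have hx2' : x 2 = 0 := by
        have key : x 2 * ((c - a) * ((c - a) * vc i2)) = 0 := by
          linear_combination (e2 i2) - 2 * a * (e1 i2) + a * a * (e0 i2)
        rcases mul_eq_zero.1 key with h | h
        · exact h
        · rcases mul_eq_zero.1 h with h' | h'
          · exact absurd (by linear_combination h' : c = a) (Ne.symm hac)
          · rcases mul_eq_zero.1 h' with h'' | h''
            · exact absurd (by linear_combination h'' : c = a) (Ne.symm hac)
            · exact absurd h'' hi2
      have hx1' : x 1 = 0 := by
        have key : x 1 * (a * v1 i1) = 0 := by
          linear_combination (e1 i1) - a * (e0 i1) - ((c - a) * vc i1) * hx2'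
        rcases mul_eq_zero.1 key with h | h
        · exact h
        · rcases mul_eq_zero.1 h with h' | h'
          · exact absurd h' ha0
          · exact absurd h' hi1
      have hx0' : x 0 = 0 := by
        have key : x 0 * v1 i1 = 0 := by
          linear_combination (e0 i1) - (u i1) * hx1' - (vc i1) * hx2'
        rcases mul_eq_zero.1 key with h | h
        · exact h
        · exact absurd h hi1
      funext i
      fin_cases i <;> simp [hx0', hx1', hx2']
    obtain ⟨g, hg⟩ := build A (a • !![(1:ℂ),1,0; 0,1,0; 0,0,-2]) ![v1, u, vc] hind
      (by intro j; fin_cases j <;>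
        simp [hv1, hvu, hc, hc2, Matrix.vecHead, Matrix.vecTail])
    exact ⟨g, a, ha0, Or.inr (Or.inr (Or.inl hg))⟩
lemma triple_case (A : Matrix (Fin 3) (Fin 3) ℂ) (hA : A ≠ 0)
    (hCH : A * A * A = 0) : Concl A := by
  by_cases h2 : A * A = 0
  · -- A² = 0 : case Ξ_{2,1}
    obtain ⟨w, hw⟩ := exists_mulVec_ne A hA
    have hv2 : A.mulVec (A.mulVec w) = 0 := by
      rw [Matrix.mulVec_mulVec, h2, Matrix.zero_mulVec]
    have hrange : LinearMap.range A.mulVecLin ≤ LinearMap.ker A.mulVecLin := by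
      rw [LinearMap.range_le_ker_iff, ← Matrix.mulVecLin_mul, h2, Matrix.mulVecLin_zero]
    have hrk : Module.finrank ℂ (LinearMap.range A.mulVecLin)
        + Module.finrank ℂ (LinearMap.ker A.mulVecLin) = 3 := by
      have := LinearMap.finrank_range_add_finrank_ker A.mulVecLin
      simpa using this
    have hk2 : 2 ≤ Module.finrank ℂ (LinearMap.ker A.mulVecLin) := by
      have := Submodule.finrank_mono hrange
      omega
    have hmem : A.mulVec w ∈ LinearMap.ker A.mulVecLin := by
      rw [LinearMap.mem_ker, Matrix.mulVecLin_apply, hv2]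
    obtain ⟨y, hy, hpair⟩ := pair_in _ hk2 (A.mulVec w) hmem hw
    have hyA : A.mulVec y = 0 := by
      rw [LinearMap.mem_ker, Matrix.mulVecLin_apply] at hy
      exact hy
    have hind : ∀ x : Fin 3 → ℂ, x 0 • y + x 1 • (A.mulVec w) + x 2 • w = 0 → x = 0 := by
      intro x hx
      have hx1 : x 2 • (A.mulVec w) = 0 := by
        have := congrArg A.mulVec hx
        simpa [Matrix.mulVec_add, Matrix.mulVec_smul, hyA, hv2] using this
      have hx2' : x 2 = 0 := by
        rcases smul_eq_zero.1 hx1 with h | h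
        · exact h
        · exact absurd h hw
      rw [hx2', zero_smul, add_zero] at hx
      have hp := hpair (x 1) (x 0) (by rw [add_comm] at hx; exact hx)
      funext i
      fin_cases i <;> simp [hp.1, hp.2, hx2']
    obtain ⟨g, hg⟩ := build A ((1:ℂ) • !![(0:ℂ),0,0; 0,0,1; 0,0,0]) ![y, A.mulVec w, w] hind
      (by intro j; fin_cases j <;> simp [hyA, hv2, Matrix.vecHead, Matrix.vecTail])
    exact ⟨g, 1, one_ne_zero, Or.inr (Or.inl hg)⟩
  · -- A² ≠ 0 : case Ξ₁
    obtain ⟨w, hw⟩ := exists_mulVec_ne _ h2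
    have hw0 : A.mulVec (A.mulVec w) ≠ 0 := by
      rw [Matrix.mulVec_mulVec]; exact hw
    have hz2 : (A * (A * A)).mulVec w = 0 := by
      rw [← mul_assoc, hCH, Matrix.zero_mulVec]
    have hind : ∀ x : Fin 3 → ℂ,
        x 0 • (A.mulVec (A.mulVec w)) + x 1 • (A.mulVec w) + x 2 • w = 0 → x = 0 := by
      intro x hx
      have hx1 : x 1 • ((A * A).mulVec w) + x 2 • (A.mulVec w) = 0 := by
        have := congrArg A.mulVec hx
        simpa [Matrix.mulVec_add, Matrix.mulVec_smul, hz2] using this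
      have hx2 : x 2 • ((A * A).mulVec w) = 0 := by
        have := congrArg A.mulVec hx1
        simpa [Matrix.mulVec_add, Matrix.mulVec_smul, hz2] using this
      have h2' : x 2 = 0 := by
        rcases smul_eq_zero.1 hx2 with h | h
        · exact h
        · exact absurd h hw
      rw [h2', zero_smul, add_zero] at hx1
      have h1' : x 1 = 0 := by
        rcases smul_eq_zero.1 hx1 with h | h
        · exact h
        · exact absurd h hw
      rw [h1', h2', zero_smul, zero_smul, add_zero, add_zero] at hx
      have h0' : x 0 = 0 := by
        rcases smul_eq_zero.1 hx with h | h
        · exact h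
        · exact absurd h hw0
      funext i
      fin_cases i <;> simp [h0', h1', h2']
    obtain ⟨g, hg⟩ := build A ((1:ℂ) • !![(0:ℂ),1,0; 0,0,1; 0,0,0])
      ![A.mulVec (A.mulVec w), A.mulVec w, w] hind
      (by intro j; fin_cases j <;> simp [hz2, Matrix.vecHead, Matrix.vecTail])
    exact ⟨g, 1, one_ne_zero, Or.inl hg⟩

/-- Jordan classification of 1-dimensional subalgebras of `sl(3, ℂ)`: every
nonzero traceless `3×3` complex matrix is conjugate, up to a nonzero scalar,
to one of the normal forms `Ξ₁`, `Ξ_{2,1}`, `Ξ_{2,3}`, `Ξ_{3,2}`, `Ξ_{3,3}`. -/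
theorem one_dim_subalgebras_of_sl3 (A : Matrix (Fin 3) (Fin 3) ℂ)
    (hA : A ≠ 0) (htr : A.trace = 0) :
    ∃ g : GL (Fin 3) ℂ, ∃ c : ℂ, c ≠ 0 ∧
      ((g : Matrix (Fin 3) (Fin 3) ℂ) * A * (↑g⁻¹ : Matrix (Fin 3) (Fin 3) ℂ) =
          c • !![(0:ℂ),1,0; 0,0,1; 0,0,0] ∨
       (g : Matrix (Fin 3) (Fin 3) ℂ) * A * (↑g⁻¹ : Matrix (Fin 3) (Fin 3) ℂ) =
          c • !![(0:ℂ),0,0; 0,0,1; 0,0,0] ∨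
       (g : Matrix (Fin 3) (Fin 3) ℂ) * A * (↑g⁻¹ : Matrix (Fin 3) (Fin 3) ℂ) =
          c • !![(1:ℂ),1,0; 0,1,0; 0,0,-2] ∨
       (g : Matrix (Fin 3) (Fin 3) ℂ) * A * (↑g⁻¹ : Matrix (Fin 3) (Fin 3) ℂ) =
          c • !![(1:ℂ),0,0; 0,-1,0; 0,0,0] ∨
       ∃ a b : ℂ, a ≠ 0 ∧ b ≠ 0 ∧ a + b ≠ 0 ∧
         (g : Matrix (Fin 3) (Fin 3) ℂ) * A * (↑g⁻¹ : Matrix (Fin 3) (Fin 3) ℂ) =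
            c • !![a,0,0; 0,b,0; 0,0,-(a+b)]) := by
  obtain ⟨a, b, c, hsum, hfac⟩ := roots3 A htr
  have hCH := CHfact A a b c hfac
  have heva : A.charpoly.eval a = 0 := by rw [hfac]; simp
  have hevb : A.charpoly.eval b = 0 := by rw [hfac]; simp
  have hevc : A.charpoly.eval c = 0 := by rw [hfac]; simp
  obtain ⟨va, na, hva⟩ := eigvec A a heva
  obtain ⟨vb, nb, hvb⟩ := eigvec A b hevb
  obtain ⟨vc, nc, hvc⟩ := eigvec A c hevc
  have main : Concl A := by
    by_cases hab : a = b
    · by_cases hac : a = c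
      · -- all roots equal, hence zero
        have ha0 : a = 0 := by linear_combination (hsum + hab + hac) / 3
        have hCH' : A * A * A = 0 := by
          rw [← hab, ← hac, ha0] at hCH
          simpa using hCH
        exact triple_case A hA hCH'
      · -- a = b ≠ c
        have hCH' : (A - a • 1) * (A - a • 1) * (A - c • 1) = 0 := by
          rw [← hab] at hCH; exact hCH
        have hs : a + a + c = 0 := by linear_combination hsum + hab
        exact double_case A htr a c hac hs hCH' va vc na nc hva hvc
    · by_cases hbc : b = c
      · -- b = c ≠ a
        have hCH' : (A - b • 1) * (A - b • 1) * (A - a • 1) = 0 := by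
          rw [← hbc] at hCH
          rw [mul_assoc, comm_smul A b a, ← mul_assoc, comm_smul A b a]
          exact hCH
        have hs : b + b + a = 0 := by linear_combination hsum + hbc
        exact double_case A htr b a (Ne.symm hab) hs hCH' vb va nb na hvb hva
      · by_cases hac : a = c
        · -- a = c ≠ b
          have hCH' : (A - a • 1) * (A - a • 1) * (A - b • 1) = 0 := by
            rw [← hac] at hCH
            rw [mul_assoc, comm_smul A b a, ← mul_assoc] at hCH
            exact hCH
          have hs : a + a + b = 0 := by linear_combination hsum + hac
          exact double_case A htr a b hab hs hCH' va vb na nb hva hvb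
        · exact distinct_case A a b c hsum hab hac hbc va vb vc na nb nc hva hvb hvc
  exact main
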